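/- arXiv:2202.03633 — 2 statements merged into one kernel-verified Lean document; each statement's English description precedes it below -/
import Mathlib

section
/- Let y in {0,1}^n contain two positions s ≠ t with y_s = y_t = 1 such that deleting position s from y yields a different string than deleting position t from y (this happens exactly when s and t do not lie in the same maximal contiguous block of ones). If y has a ones and b = n − a zeros with a,b ≥ 1, then y has strictly more than (a+1)(b+1) distinct subsequences. -/
lemma exists_sublist_counts (l : List Bool) :
    ∀ a' b', a' ≤ l.count true → b' ≤ l.count false →
    ∃ u : List Bool, u.Sublist l ∧ u.count true = a' ∧ u.count false = b' := by
  induction l with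
  | nil =>
    intro a' b' ha hb
    simp at ha hb
    exact ⟨[], List.Sublist.refl _, by simp [ha, hb]⟩
  | cons c l ih =>
    intro a' b' ha hb
    cases c with
    | true =>
      simp [List.count_cons] at ha hb
      match a' with
      | 0 =>
        obtain ⟨u, hu, h1, h2⟩ := ih 0 b' (Nat.zero_le _) hb
        exact ⟨u, hu.trans (List.sublist_cons_self _ _), h1, h2⟩
      | a'' + 1 =>
        obtain ⟨u, hu, h1, h2⟩ := ih a'' b' (by omega) hb
        exact ⟨true :: u, hu.cons₂ _, by simp [List.count_cons, h1], by
          simp [List.count_cons, h2]⟩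
    | false =>
      simp [List.count_cons] at ha hb
      match b' with
      | 0 =>
        obtain ⟨u, hu, h1, h2⟩ := ih a' 0 ha (Nat.zero_le _)
        exact ⟨u, hu.trans (List.sublist_cons_self _ _), h1, h2⟩
      | b'' + 1 =>
        obtain ⟨u, hu, h1, h2⟩ := ih a' b'' ha (by omega)
        exact ⟨false :: u, hu.cons₂ _, by simp [List.count_cons, h1], by
          simp [List.count_cons, h2]⟩

lemma count_eraseIdx_get (y : List Bool) (i : Fin y.length) (c : Bool) :
    (y.eraseIdx i.val).count c + (if y.get i = c then 1 else 0) = y.count c := by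
  rw [List.eraseIdx_eq_take_drop_succ, List.count_append]
  conv_rhs => rw [← List.take_append_drop i.val y, List.count_append]
  rw [← List.getElem_cons_drop i.isLt, List.count_cons]
  simp only [List.get_eq_getElem, beq_iff_eq]
  omega

/-- Suppose `y ∈ {0,1}^n` has `a ≥ 1` ones and `b = n − a ≥ 1` zeros, and there
are positions `s ≠ t` with `y_s = y_t = 1` such that deleting position `s`
yields a different string than deleting position `t`. Then `y` has strictly
more than `(a+1)(b+1)` distinct subsequences. -/
theorem subsequence_counts_strict_lower_bound (n a : ℕ) (y : List Bool)
    (hlen : y.length = n) (ha : y.count true = a) (hb : y.count false = n - a)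
    (ha1 : 1 ≤ a) (hb1 : 1 ≤ n - a)
    (s t : Fin y.length) (hst : s ≠ t)
    (hs : y.get s = true) (ht : y.get t = true)
    (hdiff : y.eraseIdx s.val ≠ y.eraseIdx t.val) :
    (a + 1) * (n - a + 1) < y.sublists.toFinset.card := by
  have he₁S : y.eraseIdx s.val ∈ y.sublists.toFinset := by
    simp only [List.mem_toFinset, List.mem_sublists]
    exact List.eraseIdx_sublist _ _
  have he₂S : y.eraseIdx t.val ∈ y.sublists.toFinset := by
    simp only [List.mem_toFinset, List.mem_sublists]
    exact List.eraseIdx_sublist _ _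
  have hc₁t : (y.eraseIdx s.val).count true = a - 1 := by
    have := count_eraseIdx_get y s true
    rw [hs] at this; simp at this; omega
  have hc₁f : (y.eraseIdx s.val).count false = n - a := by
    have := count_eraseIdx_get y s false
    rw [hs] at this; simp at this; omega
  have hc₂t : (y.eraseIdx t.val).count true = a - 1 := by
    have := count_eraseIdx_get y t true
    rw [ht] at this; simp at this; omega
  have hc₂f : (y.eraseIdx t.val).count false = n - a := by
    have := count_eraseIdx_get y t false
    rw [ht] at this; simp at this; omega
  set f : List Bool → ℕ × ℕ := fun l => (l.count true, l.count false) with hf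
  have hgrid : (Finset.range (a+1) ×ˢ Finset.range (n-a+1)) ⊆
      ((y.sublists.toFinset.erase (y.eraseIdx s.val)).image f) := by
    intro p hp
    obtain ⟨a', b'⟩ := p
    simp only [Finset.mem_product, Finset.mem_range] at hp
    obtain ⟨u, hu, hu1, hu2⟩ := exists_sublist_counts y a' b' (by omega) (by omega)
    by_cases hue : u = y.eraseIdx s.val
    · refine Finset.mem_image.mpr ⟨y.eraseIdx t.val,
        Finset.mem_erase.mpr ⟨Ne.symm hdiff, he₂S⟩, ?_⟩
      subst hue
      simp only [hf, Prod.mk.injEq]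
      rw [hc₂t, hc₂f, ← hu1, ← hu2, hc₁t, hc₁f]
      exact ⟨rfl, rfl⟩
    · refine Finset.mem_image.mpr ⟨u, Finset.mem_erase.mpr ⟨hue, ?_⟩, ?_⟩
      · simp [List.mem_sublists, hu]
      · simp [hf, hu1, hu2]
  have h1 : (a + 1) * (n - a + 1) ≤
      ((y.sublists.toFinset.erase (y.eraseIdx s.val)).image f).card := by
    calc (a + 1) * (n - a + 1)
        = (Finset.range (a+1) ×ˢ Finset.range (n-a+1)).card := by
          simp [Finset.card_product]
      _ ≤ _ := Finset.card_le_card hgrid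
  have h2 : ((y.sublists.toFinset.erase (y.eraseIdx s.val)).image f).card ≤
      (y.sublists.toFinset.erase (y.eraseIdx s.val)).card :=
    Finset.card_image_le
  have h3 : (y.sublists.toFinset.erase (y.eraseIdx s.val)).card =
      y.sublists.toFinset.card - 1 := Finset.card_erase_of_mem he₁S
  have h4 : 1 ≤ y.sublists.toFinset.card := Finset.card_pos.mpr ⟨_, he₁S⟩
  omega
end

section
/- For two positions s < t in a binary string y with y_s = y_t = 1, the string obtained by deleting position s equals the string obtained by deleting position t if and only if y_k = 1 for all s ≤ k ≤ t (i.e., s and t lie in the same contiguous block of ones). -/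
/-- For positions `s < t` in a binary string `y` with `y_s = y_t = 1`, deleting
position `s` yields the same string as deleting position `t` if and only if
`y_k = 1` for all `s ≤ k ≤ t`, i.e. `s` and `t` lie in the same contiguous
block of ones. -/
theorem eraseIdx_eq_iff_block_of_ones (y : List Bool) (s t : ℕ)
    (hst : s < t) (ht : t < y.length)
    (hs1 : y.get ⟨s, lt_trans hst ht⟩ = true)
    (ht1 : y.get ⟨t, ht⟩ = true) :
    y.eraseIdx s = y.eraseIdx t ↔
      ∀ k (hks : s ≤ k) (hkt : k ≤ t),
        y.get ⟨k, lt_of_le_of_lt hkt ht⟩ = true := by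
  have hs : s < y.length := lt_trans hst ht
  have hlen : (y.eraseIdx s).length = (y.eraseIdx t).length := by
    simp [List.length_eraseIdx, hs, ht]
  have hlens : (y.eraseIdx s).length = y.length - 1 := by
    simp [List.length_eraseIdx, hs]
  constructor
  · intro heq
    -- first show y[k] = true for all s ≤ k ≤ t by downward induction
    have key : ∀ j, j ≤ t - s → ∀ h : t - j < y.length, y[t - j] = true := by
      intro j
      induction j with
      | zero => intro _ h; simpa using ht1
      | succ n ih =>
        intro hj h
        have hn : n ≤ t - s := le_of_lt (Nat.lt_of_lt_of_le (Nat.lt_succ_self n) hj)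
        have hklt : t - (n+1) < t := by omega
        have hks : s ≤ t - (n+1) := by omega
        have h1 : t - (n+1) < (y.eraseIdx t).length := by
          rw [← hlen, hlens]; omega
        have h2 : t - (n+1) < (y.eraseIdx s).length := by rw [hlens]; omega
        have e1 : (y.eraseIdx t)[t - (n+1)]'h1 = y[t - (n+1)] :=
          List.getElem_eraseIdx_of_lt _ hklt
        have e2 : (y.eraseIdx s)[t - (n+1)]'h2 = y[t - (n+1) + 1]'(by omega) :=
          List.getElem_eraseIdx_of_ge _ hks
        have : y[t - (n+1)] = y[t - (n+1) + 1]'(by omega) := by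
          rw [← e1, ← e2]; simp only [heq]
        have hrw : t - (n+1) + 1 = t - n := by omega
        rw [this]
        have hih := ih hn (by omega)
        simp only [← hrw] at hih
        exact hih
    intro k hks hkt
    have : y[t - (t - k)] = true := key (t - k) (by omega) (by omega)
    simpa [Nat.sub_sub_self hkt] using this
  · intro hall
    apply List.ext_getElem hlen
    intro i h1 h2
    rcases lt_or_ge i s with his | his
    · rw [List.getElem_eraseIdx_of_lt _ his,
        List.getElem_eraseIdx_of_lt _ (lt_trans his hst)]
    · rcases lt_or_ge i t with hit | hit
      · rw [List.getElem_eraseIdx_of_ge _ his,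
          List.getElem_eraseIdx_of_lt _ hit]
        have ha : y[i+1]'(by rw [hlens] at h1; omega) = true := by
          simpa using hall (i+1) (by omega) (by omega)
        have hb : y[i]'(by omega) = true := by
          simpa using hall i his (le_of_lt hit)
        rw [ha, hb]
      · rw [List.getElem_eraseIdx_of_ge _ his,
          List.getElem_eraseIdx_of_ge _ (hit)]
end
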